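/- Let G be the subgroup of the symmetric group on {1,...,10} generated by the permutations α = (1 5)(2 8)(4 7) and σ = (2 5 7 6 10 9)(3 8 4). Then the natural action of G on the set {1,...,10} is transitive and primitive (i.e., the action is transitive and admits no nontrivial block system). -/
import Mathlib


/-- The permutation `α = (1 5)(2 8)(4 7)` of `{1,…,10}`, written on `Fin 10`
(symbol `i` corresponds to index `i-1`). -/
def permAlpha : Equiv.Perm (Fin 10) :=
  Equiv.swap 0 4 * Equiv.swap 1 7 * Equiv.swap 3 6

/-- The permutation `σ = (2 5 7 6 10 9)(3 8 4)` of `{1,…,10}`, written on `Fin 10`. -/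
def permSigma : Equiv.Perm (Fin 10) :=
  List.formPerm [(1 : Fin 10), 4, 6, 5, 9, 8] * List.formPerm [(2 : Fin 10), 7, 3]

/-- The subgroup of `S₁₀` generated by `α` and `σ`. -/
def G : Subgroup (Equiv.Perm (Fin 10)) := Subgroup.closure {permAlpha, permSigma}

def fA : Fin 10 → Fin 10 := ![4,7,2,6,0,5,3,1,8,9]
def fS : Fin 10 → Fin 10 := ![0,4,7,2,6,9,5,3,1,8]
def fS3 : Fin 10 → Fin 10 := fun x => fS (fS (fS x))
def fW : Fin 10 → Fin 10 := fun x => fA (fS (fA (fS (fA x))))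

def Good (f : Fin 10 → Fin 10) (b : Fin 10 → Bool) : Prop :=
  (∀ x, b x → b (f x)) ∨ (∀ x, b x → ¬ b (f x))

instance (f : Fin 10 → Fin 10) (b : Fin 10 → Bool) : Decidable (Good f b) := by
  unfold Good; infer_instance

set_option maxRecDepth 10000 in
theorem key : ∀ b0 b1 b2 b3 b4 b5 b6 b7 b8 b9 : Bool,
    Good fA ![b0,b1,b2,b3,b4,b5,b6,b7,b8,b9] →
    Good fS ![b0,b1,b2,b3,b4,b5,b6,b7,b8,b9] →
    Good fS3 ![b0,b1,b2,b3,b4,b5,b6,b7,b8,b9] →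
    Good fW ![b0,b1,b2,b3,b4,b5,b6,b7,b8,b9] →
    (∀ x y, ![b0,b1,b2,b3,b4,b5,b6,b7,b8,b9] x → ![b0,b1,b2,b3,b4,b5,b6,b7,b8,b9] y → x = y)
      ∨ (∀ x, ![b0,b1,b2,b3,b4,b5,b6,b7,b8,b9] x) := by decide

lemma memA : permAlpha ∈ G := Subgroup.subset_closure (Set.mem_insert _ _)
lemma memS : permSigma ∈ G := Subgroup.subset_closure (Set.mem_insert_of_mem _ rfl)

open Pointwise in
lemma good_of_block {w : Equiv.Perm (Fin 10)} (hw : w ∈ G) {B : Set (Fin 10)}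
    (hB : MulAction.IsBlock G B) : (∀ x ∈ B, w x ∈ B) ∨ (∀ x ∈ B, w x ∉ B) := by
  rcases hB.smul_eq_or_disjoint (⟨w, hw⟩ : G) with h | h
  · left
    intro x hx
    have : (⟨w, hw⟩ : G) • x ∈ (⟨w, hw⟩ : G) • B := Set.smul_mem_smul_set hx
    rw [h] at this
    exact this
  · right
    intro x hx hx2
    have hmem : (⟨w, hw⟩ : G) • x ∈ (⟨w, hw⟩ : G) • B := Set.smul_mem_smul_set hx
    exact Set.disjoint_left.1 h hmem hx2

set_option maxRecDepth 10000 in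
lemma reach : ∀ x : Fin 10, ∃ g : Equiv.Perm (Fin 10), g ∈ G ∧ g 0 = x := by
  intro x
  fin_cases x
  · exact ⟨1, one_mem G, by decide⟩
  · exact ⟨permAlpha * permSigma * permSigma * permAlpha * permSigma * permAlpha,
      mul_mem (mul_mem (mul_mem (mul_mem (mul_mem memA memS) memS) memA) memS) memA, by decide⟩
  · exact ⟨permSigma * permAlpha * permSigma * permAlpha,
      mul_mem (mul_mem (mul_mem memS memA) memS) memA, by decide⟩
  · exact ⟨permAlpha * permSigma * permAlpha,
      mul_mem (mul_mem memA memS) memA, by decide⟩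
  · exact ⟨permAlpha, memA, by decide⟩
  · exact ⟨permSigma * permSigma * permAlpha,
      mul_mem (mul_mem memS memS) memA, by decide⟩
  · exact ⟨permSigma * permAlpha, mul_mem memS memA, by decide⟩
  · exact ⟨permSigma * permSigma * permAlpha * permSigma * permAlpha,
      mul_mem (mul_mem (mul_mem (mul_mem memS memS) memA) memS) memA, by decide⟩
  · exact ⟨permSigma * permSigma * permSigma * permSigma * permAlpha,
      mul_mem (mul_mem (mul_mem (mul_mem memS memS) memS) memS) memA, by decide⟩
  · exact ⟨permSigma * permSigma * permSigma * permAlpha,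
      mul_mem (mul_mem (mul_mem memS memS) memS) memA, by decide⟩

set_option maxRecDepth 10000 in
/-- The natural action of `G = ⟨α, σ⟩` on `{1,…,10}` is transitive and primitive:
it is pretransitive and every block of the action is trivial (a subsingleton or
the whole set), i.e. there is no nontrivial block system. -/
theorem stmt10 :
    MulAction.IsPretransitive G (Fin 10) ∧
    ∀ B : Set (Fin 10), MulAction.IsBlock G B → B.Subsingleton ∨ B = Set.univ := by
  constructor
  · constructor
    intro x y
    obtain ⟨g, hg, hg0⟩ := reach x
    obtain ⟨h, hh, hh0⟩ := reach y
    refine ⟨⟨h * g⁻¹, mul_mem hh (inv_mem hg)⟩, ?_⟩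
    show (h * g⁻¹) x = y
    have : g⁻¹ x = 0 := by rw [← hg0]; simp
    simp [Equiv.Perm.mul_apply, this, hh0]
  · intro B hB
    classical
    set b : Fin 10 → Bool := fun x => decide (x ∈ B) with hb
    have hbmem : ∀ x, b x = true ↔ x ∈ B := fun x => by simp [hb]
    have hbv : ![b 0, b 1, b 2, b 3, b 4, b 5, b 6, b 7, b 8, b 9] = b := by
      funext x; fin_cases x <;> rfl
    have keyb := key (b 0) (b 1) (b 2) (b 3) (b 4) (b 5) (b 6) (b 7) (b 8) (b 9)
    rw [hbv] at keyb
    have conv : ∀ (w : Equiv.Perm (Fin 10)) (f : Fin 10 → Fin 10), ⇑w = f → w ∈ G →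
        Good f b := by
      intro w f hf hw
      subst hf
      rcases good_of_block hw hB with h | h
      · left; intro x hx
        exact (hbmem _).2 (h x ((hbmem _).1 hx))
      · right; intro x hx hx2
        exact h x ((hbmem _).1 hx) ((hbmem _).1 hx2)
    have gA : Good fA b := conv permAlpha fA (by decide) memA
    have gS : Good fS b := conv permSigma fS (by decide) memS
    have gS3 : Good fS3 b := conv (permSigma ^ 3) fS3 (by decide) (pow_mem memS 3)
    have gW : Good fW b :=
      conv (permAlpha * permSigma * permAlpha * permSigma * permAlpha) fW (by decide)
        (mul_mem (mul_mem (mul_mem (mul_mem memA memS) memA) memS) memA)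
    rcases keyb gA gS gS3 gW with h | h
    · left
      intro x hx y hy
      exact h x y ((hbmem _).2 hx) ((hbmem _).2 hy)
    · right
      exact Set.eq_univ_iff_forall.2 fun x => (hbmem _).1 (h x)
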